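/- Let P_n ∈ ℂ[X] be defined recursively together with Q_n by P₁(x) = x, Q₁(x) = 0, P_{n+1}(x) = x·P_n(x) + x·Q_n(x), Q_{n+1}(x) = P_n(x) + x·Q_n(x). Then for every N ≥ 1, P_{2N}(x) = Σ_{ℓ=1}^{N} C(2N−1, 2ℓ−1) x^{N+ℓ} as polynomials in ℂ[X]. -/

import Mathlib

open Polynomial

theorem P_even_closed_form
    (P Q : ℕ → Polynomial ℂ)
    (hP1 : P 1 = X) (hQ1 : Q 1 = 0)
    (hP : ∀ n, 1 ≤ n → P (n + 1) = X * P n + X * Q n)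
    (hQ : ∀ n, 1 ≤ n → Q (n + 1) = P n + X * Q n)
    (N : ℕ) (hN : 1 ≤ N) :
    P (2 * N) = ∑ ℓ ∈ Finset.Icc 1 N,
      (Nat.choose (2 * N - 1) (2 * ℓ - 1) : Polynomial ℂ) * X ^ (N + ℓ) := by
  have key : ∀ k : ℕ,
      P (k + 1) = ∑ m ∈ Finset.range (k + 1),
        (Nat.choose k (2 * m) : Polynomial ℂ) * X ^ (k + 1 - m) ∧
      Q (k + 1) = ∑ m ∈ Finset.range (k + 1),
        (Nat.choose k (2 * m + 1) : Polynomial ℂ) * X ^ (k - m) := by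
    intro k
    induction k with
    | zero => simp [hP1, hQ1]
    | succ k ih =>
      obtain ⟨ihP, ihQ⟩ := ih
      have hS1 : X * P (k + 1) = ∑ m ∈ Finset.range (k + 1),
          (Nat.choose k (2 * m) : Polynomial ℂ) * X ^ (k + 2 - m) := by
        rw [ihP, Finset.mul_sum]
        refine Finset.sum_congr rfl fun m hm => ?_
        simp only [Finset.mem_range] at hm
        rw [show k + 2 - m = (k + 1 - m) + 1 by omega, pow_succ]
        ring
      have hS2 : X * Q (k + 1) = ∑ m ∈ Finset.range (k + 1),
          (Nat.choose k (2 * m + 1) : Polynomial ℂ) * X ^ (k + 1 - m) := by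
        rw [ihQ, Finset.mul_sum]
        refine Finset.sum_congr rfl fun m hm => ?_
        simp only [Finset.mem_range] at hm
        rw [show k + 1 - m = (k - m) + 1 by omega, pow_succ]
        ring
      have hS1' : X * P (k + 1) = (∑ j ∈ Finset.range (k + 1),
          (Nat.choose k (2 * j + 2) : Polynomial ℂ) * X ^ (k + 1 - j)) + X ^ (k + 2) := by
        rw [hS1, Finset.sum_range_succ', Finset.sum_range_succ]
        rw [Nat.choose_eq_zero_of_lt (by omega : k < 2 * k + 2)]
        push_cast
        simp only [zero_mul, add_zero, Nat.mul_zero, Nat.choose_zero_right, Nat.cast_one,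
          one_mul, Nat.sub_zero]
        have hcc : ∀ x ∈ Finset.range k,
            ((Nat.choose k (2 * (x + 1)) : Polynomial ℂ)) * X ^ (k + 1 - x)
              = (Nat.choose k (2 * x + 2) : Polynomial ℂ) * X ^ (k + 1 - x) := by
          intro x hx
          rw [show 2 * (x + 1) = 2 * x + 2 by ring]
        rw [Finset.sum_congr rfl hcc]
      constructor
      · rw [hP (k + 1) (by omega), hS1', hS2]
        rw [Finset.sum_range_succ' (fun m => (Nat.choose (k + 1) (2 * m) : Polynomial ℂ)
          * X ^ (k + 2 - m)) (k + 1)]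
        have : ∀ j ∈ Finset.range (k + 1),
            (Nat.choose (k + 1) (2 * (j + 1)) : Polynomial ℂ) * X ^ (k + 2 - (j + 1)) =
            (Nat.choose k (2 * j + 1) : Polynomial ℂ) * X ^ (k + 1 - j)
              + (Nat.choose k (2 * j + 2) : Polynomial ℂ) * X ^ (k + 1 - j) := by
          intro j hj
          rw [show 2 * (j + 1) = (2 * j + 1) + 1 by ring, Nat.choose_succ_succ,
            show 2 * j + 1 + 1 = 2 * j + 2 by ring,
            show k + 2 - (j + 1) = k + 1 - j by omega]
          push_cast
          ring
        rw [Finset.sum_congr rfl this, Finset.sum_add_distrib]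
        simp only [Nat.mul_zero, Nat.choose_zero_right, Nat.cast_one, one_mul, Nat.sub_zero]
        ring
      · rw [hQ (k + 1) (by omega), ihP, hS2]
        rw [Finset.sum_range_succ (fun m => (Nat.choose (k + 1) (2 * m + 1) : Polynomial ℂ)
          * X ^ (k + 1 - m)) (k + 1)]
        rw [Nat.choose_eq_zero_of_lt (by omega : k + 1 < 2 * (k + 1) + 1)]
        push_cast
        rw [← Finset.sum_add_distrib]
        simp only [zero_mul, add_zero]
        refine Finset.sum_congr rfl fun m hm => ?_
        simp only [Finset.mem_range] at hm
        rw [show 2 * m + 1 = (2 * m) + 1 from rfl, Nat.choose_succ_succ]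
        push_cast
        ring
  have h2N : 2 * N = (2 * N - 1) + 1 := by omega
  rw [h2N, (key (2 * N - 1)).1]
  rw [show (2 * N - 1) + 1 = 2 * N by omega]
  have hsub : Finset.range N ⊆ Finset.range (2 * N) := by
    apply Finset.range_subset_range.2; omega
  rw [← Finset.sum_subset hsub (fun m _ hm => by
    simp only [Finset.mem_range, not_lt] at hm ⊢
    rw [Nat.choose_eq_zero_of_lt (by omega : 2 * N - 1 < 2 * m)]
    push_cast
    simp)]
  refine Finset.sum_nbij' (fun m => N - m) (fun ℓ => N - ℓ) ?_ ?_ ?_ ?_ ?_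
  · intro m hm
    simp only [Finset.mem_range] at hm
    simp only [Finset.mem_Icc]
    omega
  · intro ℓ hℓ
    simp only [Finset.mem_Icc] at hℓ
    simp only [Finset.mem_range]
    omega
  · intro m hm
    simp only [Finset.mem_range] at hm
    beta_reduce
    omega
  · intro ℓ hℓ
    simp only [Finset.mem_Icc] at hℓ
    beta_reduce
    omega
  · intro m hm
    simp only [Finset.mem_range] at hm
    beta_reduce
    have h1 : 2 * (N - m) - 1 = (2 * N - 1) - (2 * m) := by omega
    rw [h1, Nat.choose_symm (by omega : 2 * m ≤ 2 * N - 1),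
      show 2 * N - m = N + (N - m) by omega]
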